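/- Fix M > 0 and L > 2M, and let E₀ be the Schwarzschild Ernst potential with mass M. Then for every (x,ρ) ∈ ℝ × [0,∞) that is not of the form (±M + nL, 0) for some n ∈ ℤ, the infinite product E(x,ρ) = E₀(x,ρ) · ∏_{n=1}^∞ E₀(x+nL, ρ) E₀(x−nL, ρ) exp(4M/(nL)) converges, and the resulting function E satisfies E(x+L, ρ) = E(x, ρ) at all such points. -/

import Mathlib

/-- The Schwarzschild Ernst potential with mass `M`:
`E₀(x,ρ) = (r₁ + r₂ − 2M)/(r₁ + r₂ + 2M)` with `r₁ = √((x−M)²+ρ²)`, `r₂ = √((x+M)²+ρ²)`. -/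
noncomputable def schwE (M x ρ : ℝ) : ℝ :=
  (Real.sqrt ((x - M)^2 + ρ^2) + Real.sqrt ((x + M)^2 + ρ^2) - 2*M) /
  (Real.sqrt ((x - M)^2 + ρ^2) + Real.sqrt ((x + M)^2 + ρ^2) + 2*M)

/-- The logarithm `ω₀ = log E₀` of the Schwarzschild Ernst potential. -/
noncomputable def schwOmega (M x ρ : ℝ) : ℝ := Real.log (schwE M x ρ)

/-- The periodic Schwarzschild Ernst potential with mass `M` and period `L`:
`E(x,ρ) = E₀(x,ρ) ∏_{n=1}^∞ E₀(x+nL,ρ) E₀(x−nL,ρ) exp(4M/(nL))`. -/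
noncomputable def perE (M L x ρ : ℝ) : ℝ :=
  schwE M x ρ * ∏' n : ℕ,
    (schwE M (x + ((n : ℝ) + 1) * L) ρ * schwE M (x - ((n : ℝ) + 1) * L) ρ *
      Real.exp (4*M / (((n : ℝ) + 1) * L)))

/-- The logarithm of the periodic Schwarzschild Ernst potential:
`ω(x,ρ) = ω₀(x,ρ) + ∑_{n=1}^∞ [ω₀(x+nL,ρ) + ω₀(x−nL,ρ) + 4M/(nL)]`. -/
noncomputable def perOmega (M L x ρ : ℝ) : ℝ :=
  schwOmega M x ρ + ∑' n : ℕ,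
    (schwOmega M (x + ((n : ℝ) + 1) * L) ρ + schwOmega M (x - ((n : ℝ) + 1) * L) ρ +
      4*M / (((n : ℝ) + 1) * L))



/-- helper: √(a²+b²) ≤ a + b²/(2a) for a > 0 -/
lemma sqrt_sq_add_le (a b : ℝ) (ha : 0 < a) : Real.sqrt (a^2 + b^2) ≤ a + b^2/(2*a) := by
  have h0 : 0 ≤ a + b^2/(2*a) := by positivity
  rw [show a + b^2/(2*a) = Real.sqrt ((a + b^2/(2*a))^2) from (Real.sqrt_sq h0).symm]
  apply Real.sqrt_le_sqrt
  have : (a + b^2/(2*a))^2 = a^2 + b^2 + (b^2/(2*a))^2 := by field_simp; ring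
  nlinarith [sq_nonneg (b^2/(2*a))]

lemma le_sqrt_sq_add (a b : ℝ) : |a| ≤ Real.sqrt (a^2 + b^2) := by
  rw [show |a| = Real.sqrt (a^2) from (Real.sqrt_sq_eq_abs a).symm]
  exact Real.sqrt_le_sqrt (by nlinarith [sq_nonneg b])

lemma schwE_even (M y ρ : ℝ) : schwE M (-y) ρ = schwE M y ρ := by
  unfold schwE
  rw [show (-y - M)^2 = (y + M)^2 by ring, show (-y + M)^2 = (y - M)^2 by ring]
  ring

lemma schwE_denom_pos (M y ρ : ℝ) (hM : 0 < M) :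
    0 < Real.sqrt ((y - M)^2 + ρ^2) + Real.sqrt ((y + M)^2 + ρ^2) + 2*M := by
  have := Real.sqrt_nonneg ((y - M)^2 + ρ^2)
  have := Real.sqrt_nonneg ((y + M)^2 + ρ^2)
  linarith

lemma schwE_num_nonneg (M y ρ : ℝ) :
    0 ≤ Real.sqrt ((y - M)^2 + ρ^2) + Real.sqrt ((y + M)^2 + ρ^2) - 2*M := by
  have h1 := le_sqrt_sq_add (y - M) ρ
  have h2 := le_sqrt_sq_add (y + M) ρ
  have : |y - M| + |y + M| ≥ 2*M := by
    have := abs_sub_abs_le_abs_sub (y + M) (y - M)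
    have h3 := abs_add_le (y - M) (M + M)
    have := abs_sub (y + M) (y - M)
    cases' abs_cases (y - M) with h h <;> cases' abs_cases (y + M) with h' h' <;> linarith
  linarith

lemma schwE_nonneg (M y ρ : ℝ) (hM : 0 < M) : 0 ≤ schwE M y ρ :=
  div_nonneg (schwE_num_nonneg M y ρ) (schwE_denom_pos M y ρ hM).le

lemma schwE_pos (M y ρ : ℝ) (hM : 0 < M) (h : ρ ≠ 0 ∨ M < |y|) : 0 < schwE M y ρ := by
  apply div_pos _ (schwE_denom_pos M y ρ hM)
  have h1 := le_sqrt_sq_add (y - M) ρ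
  have h2 := le_sqrt_sq_add (y + M) ρ
  rcases h with h | h
  · have hρ : 0 < ρ^2 := by positivity
    have h1' : |y - M| < Real.sqrt ((y - M)^2 + ρ^2) := by
      rw [show |y - M| = Real.sqrt ((y-M)^2) from (Real.sqrt_sq_eq_abs _).symm]
      exact Real.sqrt_lt_sqrt (sq_nonneg _) (by linarith)
    have : |y - M| + |y + M| ≥ 2*M := by
      cases' abs_cases (y - M) with h h <;> cases' abs_cases (y + M) with h' h' <;> linarith
    linarith
  · have : 2*M < |y - M| + |y + M| := by
      cases' abs_cases y with h' h' <;>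
        cases' abs_cases (y - M) with h1' h1' <;> cases' abs_cases (y + M) with h2' h2' <;> linarith
    linarith

lemma schwE_zero (M y : ℝ) (hM : 0 < M) (h : |y| < M) : schwE M y 0 = 0 := by
  unfold schwE
  have h1 : Real.sqrt ((y - M)^2 + 0^2) = M - y := by
    rw [show (y - M)^2 + 0^2 = (M - y)^2 by ring, Real.sqrt_sq (by cases' abs_cases y with h' h' <;> linarith)]
  have h2 : Real.sqrt ((y + M)^2 + 0^2) = y + M := by
    rw [show (y + M)^2 + 0^2 = (y + M)^2 by ring, Real.sqrt_sq (by cases' abs_cases y with h' h' <;> linarith)]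
  rw [h1, h2]
  simp [div_eq_zero_iff]
  left; ring

/-- crude bound: `|ω₀(y)| ≤ 2M/(y−M)` for `y > M`. -/
lemma schwOmega_abs_le (M y ρ : ℝ) (hM : 0 < M) (hy : M < y) :
    |schwOmega M y ρ| ≤ 2*M/(y - M) := by
  set r1 := Real.sqrt ((y - M)^2 + ρ^2) with hr1
  set r2 := Real.sqrt ((y + M)^2 + ρ^2) with hr2
  have hyM : 0 < y - M := by linarith
  have hr1l : y - M ≤ r1 := by
    have := le_sqrt_sq_add (y - M) ρ
    rwa [abs_of_pos hyM] at this
  have hr2l : y + M ≤ r2 := by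
    have := le_sqrt_sq_add (y + M) ρ
    rwa [abs_of_pos (by linarith)] at this
  have hnum : 0 < r1 + r2 - 2*M := by linarith
  have hden : 0 < r1 + r2 + 2*M := by linarith
  have hE : schwE M y ρ = (r1 + r2 - 2*M)/(r1 + r2 + 2*M) := rfl
  clear_value r1 r2
  clear hr1 hr2
  set a := 4*M/(r1 + r2 - 2*M) with ha
  have ha0 : 0 < a := by positivity
  have hfrac : (r1 + r2 - 2*M)/(r1 + r2 + 2*M) = (1 + a)⁻¹ := by
    rw [ha]; field_simp; ring
  have hω : schwOmega M y ρ = -Real.log (1 + a) := by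
    rw [schwOmega, hE, hfrac, Real.log_inv]
  have hlog1 : Real.log (1 + a) ≤ a := by
    have := Real.log_le_sub_one_of_pos (show (0:ℝ) < 1 + a by linarith)
    linarith
  have hlog0 : 0 ≤ Real.log (1 + a) := Real.log_nonneg (by linarith)
  have haup : a ≤ 2*M/(y - M) := by
    rw [ha, show 2*M/(y-M) = 4*M/(2*(y-M)) by rw [div_eq_div_iff (by linarith) (by linarith)]; ring]
    apply div_le_div_of_nonneg_left (by linarith) (by linarith) (by linarith)
  rw [hω, abs_neg, abs_of_nonneg hlog0]
  linarith

set_option maxHeartbeats 1000000 in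
/-- Precise single-side estimate: `|ω₀(y) + 2M/t| ≤ (16M² + 4MD)/t²`. -/
lemma omega_single (M ρ y t D : ℝ) (hM : 0 < M) (ht : 4*M ≤ t)
    (hy : t ≤ 2*(y - M)) (hyM : 1 ≤ y - M) (hD : |t + M - y| + ρ^2 ≤ D) :
    |schwOmega M y ρ + 2*M/t| ≤ (16*M^2 + 4*M*D)/t^2 := by
  set r1 := Real.sqrt ((y - M)^2 + ρ^2) with hr1
  set r2 := Real.sqrt ((y + M)^2 + ρ^2) with hr2
  have ht0 : 0 < t := by linarith
  have hyM0 : 0 < y - M := by linarith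
  have hyM2 : 0 < y + M := by linarith
  have hr1l : y - M ≤ r1 := by
    have := le_sqrt_sq_add (y - M) ρ; rwa [abs_of_pos hyM0] at this
  have hr2l : y + M ≤ r2 := by
    have := le_sqrt_sq_add (y + M) ρ; rwa [abs_of_pos hyM2] at this
  have hr1u : r1 ≤ (y - M) + ρ^2/(2*(y - M)) := sqrt_sq_add_le _ _ hyM0
  have hr2u : r2 ≤ (y + M) + ρ^2/(2*(y - M)) := by
    refine (sqrt_sq_add_le _ _ hyM2).trans ?_
    have : ρ^2/(2*(y + M)) ≤ ρ^2/(2*(y - M)) :=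
      div_le_div_of_nonneg_left (sq_nonneg ρ) (by linarith) (by linarith)
    linarith
  have hρsmall : ρ^2/(2*(y - M)) ≤ ρ^2 := by
    rw [div_le_iff₀ (by linarith)]
    nlinarith [sq_nonneg ρ]
  have hnum : 0 < r1 + r2 - 2*M := by linarith
  have hden : 0 < r1 + r2 + 2*M := by linarith
  have hE : schwE M y ρ = (r1 + r2 - 2*M)/(r1 + r2 + 2*M) := rfl
  clear_value r1 r2
  clear hr1 hr2
  set a := 4*M/(r1 + r2 - 2*M) with ha
  have ha0 : 0 < a := by positivity
  have hfrac : (r1 + r2 - 2*M)/(r1 + r2 + 2*M) = (1 + a)⁻¹ := by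
    rw [ha]; field_simp; ring
  have hω : schwOmega M y ρ = -Real.log (1 + a) := by
    rw [schwOmega, hE, hfrac, Real.log_inv]
  -- a ≤ 4M/t ≤ 1
  have hst : t ≤ r1 + r2 - 2*M := by linarith
  have haup : a ≤ 4*M/t :=
    div_le_div_of_nonneg_left (by linarith) ht0 hst
  -- log bounds
  have hlog1 : Real.log (1 + a) ≤ a := by
    have := Real.log_le_sub_one_of_pos (show (0:ℝ) < 1 + a by linarith)
    linarith
  have hlog2 : a - a^2 ≤ Real.log (1 + a) := by
    have h := Real.log_le_sub_one_of_pos (show (0:ℝ) < (1 + a)⁻¹ by positivity)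
    rw [Real.log_inv] at h
    have h2 : (1 + a)⁻¹ - 1 = -(a/(1 + a)) := by field_simp; ring
    rw [h2] at h
    have h3 : a - a^2 ≤ a/(1 + a) := by
      rw [le_div_iff₀ (by linarith : (0:ℝ) < 1 + a)]
      nlinarith [sq_nonneg a, ha0.le]
    linarith
  have hwa : |(-Real.log (1 + a)) + a| ≤ a^2 := by
    rw [abs_le]; constructor <;> nlinarith
  -- |a - 2M/t| ≤ 4MD/t²
  have hD0 : 0 ≤ D := le_trans (by positivity) hD
  have hts : |2*t + 2*M - (r1 + r2)| ≤ 2*D := by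
    rw [abs_le]; constructor
    · linarith [neg_abs_le (t + M - y), sq_nonneg ρ]
    · linarith [le_abs_self (t + M - y), sq_nonneg ρ]
  have ha2 : |a - 2*M/t| ≤ 4*M*D/t^2 := by
    have heq : a - 2*M/t = 2*M*(2*t + 2*M - (r1 + r2))/((r1 + r2 - 2*M)*t) := by
      rw [ha, div_sub_div _ _ hnum.ne' ht0.ne']; ring
    rw [heq, abs_div, abs_mul]
    have hpos : 0 < (r1 + r2 - 2*M)*t := by positivity
    rw [abs_of_pos hpos, abs_of_pos (by linarith : (0:ℝ) < 2*M)]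
    rw [div_le_div_iff₀ hpos (by positivity)]
    have h1 : 2*M*|2*t + 2*M - (r1 + r2)| ≤ 2*M*(2*D) := by
      apply mul_le_mul_of_nonneg_left hts (by linarith)
    have h2 : t*t ≤ (r1 + r2 - 2*M)*t := by nlinarith
    calc 2*M*|2*t + 2*M - (r1 + r2)| * t^2 ≤ 2*M*(2*D) * t^2 :=
          mul_le_mul_of_nonneg_right h1 (sq_nonneg t)
      _ = 4*M*D*(t*t) := by ring
      _ ≤ 4*M*D*((r1 + r2 - 2*M)*t) := by
          apply mul_le_mul_of_nonneg_left h2 (by positivity)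
  -- combine
  have key : |schwOmega M y ρ + 2*M/t| ≤ a^2 + 4*M*D/t^2 := by
    rw [hω]
    calc |(-Real.log (1+a)) + 2*M/t|
        = |((-Real.log (1+a)) + a) + (2*M/t - a)| := by ring_nf
      _ ≤ |(-Real.log (1+a)) + a| + |2*M/t - a| := abs_add_le _ _
      _ ≤ a^2 + 4*M*D/t^2 := by rw [abs_sub_comm]; exact add_le_add hwa ha2
  have ha2' : a^2 ≤ 16*M^2/t^2 := by
    have : a^2 ≤ (4*M/t)^2 := by nlinarith
    calc a^2 ≤ (4*M/t)^2 := this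
      _ = 16*M^2/t^2 := by field_simp; ring
  calc |schwOmega M y ρ + 2*M/t| ≤ a^2 + 4*M*D/t^2 := key
    _ ≤ 16*M^2/t^2 + 4*M*D/t^2 := by linarith
    _ = (16*M^2 + 4*M*D)/t^2 := by ring

/-- Pair estimate. -/
lemma omega_pair (M ρ x t : ℝ) (hM : 0 < M) (ht : 2*|x| + 6*M + 2 ≤ t) :
    |schwOmega M (x + t) ρ + schwOmega M (x - t) ρ + 4*M/t| ≤
      (32*M^2 + 8*M*(|x| + M + ρ^2))/t^2 := by
  have hx1 := le_abs_self x
  have hx2 := neg_abs_le x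
  have habs : 0 ≤ |x| := abs_nonneg x
  set D := |x| + M + ρ^2 with hDdef
  have h1 : |schwOmega M (x + t) ρ + 2*M/t| ≤ (16*M^2 + 4*M*D)/t^2 := by
    apply omega_single M ρ (x + t) t D hM (by linarith) (by linarith) (by linarith)
    have : |t + M - (x + t)| = |M - x| := by ring_nf
    rw [this]
    have : |M - x| ≤ M + |x| := by
      cases' abs_cases (M - x) with h h <;> cases' abs_cases x with h' h' <;> linarith
    linarith
  have h2 : |schwOmega M (t - x) ρ + 2*M/t| ≤ (16*M^2 + 4*M*D)/t^2 := by
    apply omega_single M ρ (t - x) t D hM (by linarith) (by linarith) (by linarith)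
    have : |t + M - (t - x)| = |M + x| := by ring_nf
    rw [this]
    have : |M + x| ≤ M + |x| := by
      cases' abs_cases (M + x) with h h <;> cases' abs_cases x with h' h' <;> linarith
    linarith
  have heven : schwOmega M (x - t) ρ = schwOmega M (t - x) ρ := by
    rw [schwOmega, schwOmega, show x - t = -(t - x) by ring, schwE_even]
  rw [heven]
  have : schwOmega M (x + t) ρ + schwOmega M (t - x) ρ + 4*M/t =
      (schwOmega M (x + t) ρ + 2*M/t) + (schwOmega M (t - x) ρ + 2*M/t) := by ring
  rw [this]
  calc |(schwOmega M (x + t) ρ + 2*M/t) + (schwOmega M (t - x) ρ + 2*M/t)|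
      ≤ |schwOmega M (x + t) ρ + 2*M/t| + |schwOmega M (t - x) ρ + 2*M/t| := abs_add_le _ _
    _ ≤ (16*M^2 + 4*M*D)/t^2 + (16*M^2 + 4*M*D)/t^2 := add_le_add h1 h2
    _ = (32*M^2 + 8*M*D)/t^2 := by ring

lemma summable_one_div_nat_add_one_sq :
    Summable (fun k : ℕ => 1/((k:ℝ)+1)^2) := by
  have h : Summable (fun n : ℕ => 1/(n:ℝ)^2) := by
    simpa using Real.summable_one_div_nat_pow.mpr one_lt_two
  have := (summable_nat_add_iff 1).mpr h
  refine this.congr fun k => ?_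
  push_cast
  ring

lemma summable_g (M L x ρ : ℝ) (hM : 0 < M) (hL : 2*M < L) :
    Summable (fun n : ℕ => schwOmega M (x + ((n:ℝ)+1)*L) ρ +
      schwOmega M (x - ((n:ℝ)+1)*L) ρ + 4*M/(((n:ℝ)+1)*L)) := by
  have hL0 : 0 < L := by linarith
  set T := 2*|x| + 6*M + 2 with hT
  set N := ⌈T/L⌉₊ with hN
  set C := 32*M^2 + 8*M*(|x| + M + ρ^2) with hC
  have hC0 : 0 ≤ C := by positivity
  rw [← summable_nat_add_iff N]
  apply Summable.of_norm
  have hsum : Summable (fun k : ℕ => C/L^2 * (1/((k:ℝ)+1)^2)) :=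
    summable_one_div_nat_add_one_sq.mul_left _
  apply hsum.of_nonneg_of_le (fun k => norm_nonneg _)
  intro k
  set t := ((↑(k + N):ℝ)+1)*L with htdef
  have ht' : t = ((k:ℝ) + (N:ℝ) + 1)*L := by rw [htdef]; push_cast; ring
  have hNL : T ≤ (N:ℝ)*L := by
    rw [hN]
    calc T = (T/L)*L := by field_simp
      _ ≤ (⌈T/L⌉₊:ℝ)*L := by
          apply mul_le_mul_of_nonneg_right (Nat.le_ceil _) hL0.le
  have hTt : T ≤ t := by
    rw [ht']
    nlinarith [(Nat.cast_nonneg k : (0:ℝ) ≤ k)]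
  have ht0 : 0 < t := by rw [ht']; positivity
  have hbound := omega_pair M ρ x t hM hTt
  rw [Real.norm_eq_abs]
  refine le_trans hbound ?_
  have hkl : ((k:ℝ)+1)*L ≤ t := by
    rw [ht']
    nlinarith [(Nat.cast_nonneg N : (0:ℝ) ≤ N), (Nat.cast_nonneg k : (0:ℝ) ≤ k)]
  have hkl0 : 0 < ((k:ℝ)+1)*L := by positivity
  calc C/t^2 ≤ C/(((k:ℝ)+1)*L)^2 := by
        apply div_le_div_of_nonneg_left hC0 (by positivity) (by nlinarith)
    _ = C/L^2 * (1/((k:ℝ)+1)^2) := by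
        rw [mul_pow, div_mul_eq_div_div_swap, div_eq_mul_one_div]

open Filter Topology

lemma hasProd_exp_of_summable_log (f : ℕ → ℝ) (hf : ∀ n, 0 < f n)
    (h : Summable (fun n => Real.log (f n))) :
    HasProd f (Real.exp (∑' n, Real.log (f n))) := by
  have hs := h.hasSum
  unfold HasProd
  have heq : (fun s : Finset ℕ => ∏ i ∈ s, f i) =
      fun s : Finset ℕ => Real.exp (∑ i ∈ s, Real.log (f i)) := by
    funext s
    rw [Real.exp_sum]
    exact Finset.prod_congr rfl (fun i _ => (Real.exp_log (hf i)).symm)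
  rw [heq]
  exact (Real.continuous_exp.continuousAt.tendsto).comp hs

lemma hasProd_zero_of_zero_term (f : ℕ → ℝ) (n₀ : ℕ) (h : f n₀ = 0) : HasProd f 0 := by
  unfold HasProd
  apply Filter.Tendsto.congr' _ tendsto_const_nhds
  filter_upwards [Filter.eventually_ge_atTop ({n₀} : Finset ℕ)] with s hs
  exact (Finset.prod_eq_zero (by simpa using hs) h).symm

lemma tendsto_omega (M ρ : ℝ) (hM : 0 < M) (u : ℕ → ℝ)
    (hu : Tendsto u atTop atTop) :
    Tendsto (fun N => schwOmega M (u N) ρ) atTop (𝓝 0) := by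
  refine squeeze_zero_norm' (a := fun N => 2*M/(u N - M)) ?_ ?_
  · filter_upwards [hu.eventually_ge_atTop (M+1)] with N hN
    rw [Real.norm_eq_abs]
    exact schwOmega_abs_le M (u N) ρ hM (by linarith)
  · apply Tendsto.div_atTop (tendsto_const_nhds (x := 2*M))
    exact tendsto_atTop_add_const_right atTop (-M) hu

noncomputable def pfac (M L ρ y : ℝ) (n : ℕ) : ℝ :=
  schwE M (y + ((n:ℝ)+1)*L) ρ * schwE M (y - ((n:ℝ)+1)*L) ρ *
    Real.exp (4*M/(((n:ℝ)+1)*L))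

noncomputable def gterm (M L ρ y : ℝ) (n : ℕ) : ℝ :=
  schwOmega M (y + ((n:ℝ)+1)*L) ρ + schwOmega M (y - ((n:ℝ)+1)*L) ρ +
    4*M/(((n:ℝ)+1)*L)

lemma perE_eq (M L y ρ : ℝ) : perE M L y ρ = schwE M y ρ * ∏' n, pfac M L ρ y n := rfl

lemma summable_gterm (M L ρ y : ℝ) (hM : 0 < M) (hL : 2*M < L) :
    Summable (gterm M L ρ y) := summable_g M L y ρ hM hL

lemma multipliable_pfac (M L ρ y : ℝ) (hM : 0 < M) (hL : 2*M < L) :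
    Multipliable (pfac M L ρ y) := by
  by_cases hz : ∃ n, pfac M L ρ y n = 0
  · obtain ⟨n₀, hn₀⟩ := hz
    exact ⟨0, hasProd_zero_of_zero_term _ n₀ hn₀⟩
  · push_neg at hz
    have hpos : ∀ n, 0 < pfac M L ρ y n := by
      intro n
      have h0 : 0 ≤ pfac M L ρ y n :=
        mul_nonneg (mul_nonneg (schwE_nonneg _ _ _ hM) (schwE_nonneg _ _ _ hM))
          (Real.exp_pos _).le
      exact lt_of_le_of_ne h0 (Ne.symm (hz n))
    have hlog : (fun n => Real.log (pfac M L ρ y n)) = gterm M L ρ y := by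
      funext n
      have h1 : schwE M (y + ((n:ℝ)+1)*L) ρ ≠ 0 := by
        intro h; apply hz n; unfold pfac; rw [h]; ring
      have h2 : schwE M (y - ((n:ℝ)+1)*L) ρ ≠ 0 := by
        intro h; apply hz n; unfold pfac; rw [h]; ring
      unfold pfac gterm
      rw [Real.log_mul (mul_ne_zero h1 h2) (Real.exp_ne_zero _),
        Real.log_mul h1 h2, Real.log_exp]
      rfl
    exact ⟨_, hasProd_exp_of_summable_log _ hpos (by rw [hlog]; exact summable_gterm M L ρ y hM hL)⟩

/-- In the everywhere-positive case, `perE = exp(ω₀ + ∑ g)`. -/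
lemma perE_exp (M L ρ y : ℝ) (hM : 0 < M) (hL : 2*M < L)
    (hpos : ∀ k : ℤ, 0 < schwE M (y + k*L) ρ) :
    perE M L y ρ = Real.exp (schwOmega M y ρ + ∑' n, gterm M L ρ y n) := by
  have hpy : 0 < schwE M y ρ := by simpa using hpos 0
  have hp1 : ∀ n : ℕ, 0 < schwE M (y + ((n:ℝ)+1)*L) ρ := by
    intro n; have h := hpos ((n:ℤ)+1); push_cast at h; exact h
  have hp2 : ∀ n : ℕ, 0 < schwE M (y - ((n:ℝ)+1)*L) ρ := by
    intro n; have h := hpos (-(n:ℤ)-1); push_cast at h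
    have e : y - ((n:ℝ)+1)*L = y + (-(n:ℝ)-1)*L := by ring
    rw [e]; exact h
  have hposf : ∀ n, 0 < pfac M L ρ y n := fun n =>
    mul_pos (mul_pos (hp1 n) (hp2 n)) (Real.exp_pos _)
  have hlog : (fun n => Real.log (pfac M L ρ y n)) = gterm M L ρ y := by
    funext n
    unfold pfac gterm
    rw [Real.log_mul (mul_pos (hp1 n) (hp2 n)).ne' (Real.exp_ne_zero _),
      Real.log_mul (hp1 n).ne' (hp2 n).ne', Real.log_exp]
    rfl
  have hsum : Summable (fun n => Real.log (pfac M L ρ y n)) := by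
    rw [hlog]; exact summable_gterm M L ρ y hM hL
  have hprod := hasProd_exp_of_summable_log _ hposf hsum
  rw [perE_eq, hprod.tprod_eq, ← Real.exp_log hpy, ← Real.exp_add]
  congr 1
  · exact congrArg _ (by rw [hlog])

/-- Telescoping periodicity of `ω₀ + ∑ g`. -/
lemma omega_shift (M L ρ x : ℝ) (hM : 0 < M) (hL : 2*M < L) :
    schwOmega M (x+L) ρ + ∑' n, gterm M L ρ (x+L) n =
    schwOmega M x ρ + ∑' n, gterm M L ρ x n := by
  have hL0 : 0 < L := by linarith
  set F : ℕ → ℝ := fun n => schwOmega M (x + ((n:ℝ)+1)*L) ρ with hF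
  set H : ℕ → ℝ := fun n => schwOmega M (x - (n:ℝ)*L) ρ with hH
  have tele : ∀ N : ℕ,
      (schwOmega M (x+L) ρ + ∑ n ∈ Finset.range N, gterm M L ρ (x+L) n) -
      (schwOmega M x ρ + ∑ n ∈ Finset.range N, gterm M L ρ x n) = F N - H N := by
    intro N
    have hgdiff : ∀ n ∈ Finset.range N,
        gterm M L ρ (x+L) n - gterm M L ρ x n = (F (n+1) - F n) + (H n - H (n+1)) := by
      intro n _
      unfold F H
      unfold gterm
      push_cast
      have e1 : x + L + ((n:ℝ)+1)*L = x + ((n:ℝ)+1+1)*L := by ring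
      have e2 : x + L - ((n:ℝ)+1)*L = x - (n:ℝ)*L := by ring
      have e3 : x - ((n:ℝ)+1)*L = x - ((n:ℝ)+1)*L := rfl
      rw [e1, e2]
      ring
    have hF0 : F 0 = schwOmega M (x+L) ρ := by unfold F; norm_num
    have hH0 : H 0 = schwOmega M x ρ := by unfold H; norm_num
    calc (schwOmega M (x+L) ρ + ∑ n ∈ Finset.range N, gterm M L ρ (x+L) n) -
        (schwOmega M x ρ + ∑ n ∈ Finset.range N, gterm M L ρ x n)
        = (∑ n ∈ Finset.range N, (gterm M L ρ (x+L) n - gterm M L ρ x n)) +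
          (schwOmega M (x+L) ρ - schwOmega M x ρ) := by
          rw [Finset.sum_sub_distrib]; ring
      _ = (∑ n ∈ Finset.range N, ((F (n+1) - F n) + (H n - H (n+1)))) +
          (schwOmega M (x+L) ρ - schwOmega M x ρ) := by
          rw [Finset.sum_congr rfl hgdiff]
      _ = ((F N - F 0) + (H 0 - H N)) + (schwOmega M (x+L) ρ - schwOmega M x ρ) := by
          rw [Finset.sum_add_distrib, Finset.sum_range_sub F, Finset.sum_range_sub' H]
      _ = F N - H N := by rw [hF0, hH0]; ring
  have hsx := (summable_gterm M L ρ x hM hL).hasSum.tendsto_sum_nat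
  have hsxL := (summable_gterm M L ρ (x+L) hM hL).hasSum.tendsto_sum_nat
  have hmain : Tendsto (fun N =>
      (schwOmega M (x+L) ρ + ∑ n ∈ Finset.range N, gterm M L ρ (x+L) n) -
      (schwOmega M x ρ + ∑ n ∈ Finset.range N, gterm M L ρ x n)) atTop
      (𝓝 ((schwOmega M (x+L) ρ + ∑' n, gterm M L ρ (x+L) n) -
        (schwOmega M x ρ + ∑' n, gterm M L ρ x n))) :=
    (tendsto_const_nhds.add hsxL).sub (tendsto_const_nhds.add hsx)
  have hTF : Tendsto F atTop (𝓝 0) := by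
    apply tendsto_omega M ρ hM
    apply tendsto_atTop_add_const_left
    apply Tendsto.atTop_mul_const hL0
    exact tendsto_atTop_add_const_right atTop 1 tendsto_natCast_atTop_atTop
  have hTH : Tendsto H atTop (𝓝 0) := by
    have hHeq : H = fun N : ℕ => schwOmega M ((N:ℝ)*L - x) ρ := by
      funext N
      unfold H
      simp only [schwOmega]
      rw [show x - (N:ℝ)*L = -((N:ℝ)*L - x) by ring, schwE_even]
    rw [hHeq]
    apply tendsto_omega M ρ hM
    apply tendsto_atTop_add_const_right
    exact Tendsto.atTop_mul_const hL0 tendsto_natCast_atTop_atTop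
  have hmain' : Tendsto (fun N =>
      (schwOmega M (x+L) ρ + ∑ n ∈ Finset.range N, gterm M L ρ (x+L) n) -
      (schwOmega M x ρ + ∑ n ∈ Finset.range N, gterm M L ρ x n)) atTop (𝓝 0) := by
    have := hTF.sub hTH
    rw [sub_zero] at this
    exact this.congr fun N => (tele N).symm
  have := tendsto_nhds_unique hmain hmain'
  linarith [sub_eq_zero.mp this]

lemma perE_eq_zero (M L y : ℝ) (hM : 0 < M) (hL0 : 0 < L) (j : ℤ)
    (hj : |y + j*L| < M) : perE M L y 0 = 0 := by
  rcases lt_trichotomy j 0 with hlt | heq | hgt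
  · set n₀ : ℕ := (-j).toNat - 1 with hn₀def
    have hc : ((n₀:ℤ)) = -j - 1 := by omega
    have hcast : ((n₀:ℝ) + 1) = -(j:ℝ) := by
      have := congrArg (Int.cast : ℤ → ℝ) hc
      push_cast at this
      linarith
    have harg : y - ((n₀:ℝ)+1)*L = y + (j:ℝ)*L := by rw [hcast]; ring
    have hz : schwE M (y - ((n₀:ℝ)+1)*L) 0 = 0 := by
      rw [harg]; exact schwE_zero _ _ hM hj
    have hfz : pfac M L 0 y n₀ = 0 := by unfold pfac; rw [hz]; ring
    rw [perE_eq, (hasProd_zero_of_zero_term _ n₀ hfz).tprod_eq, mul_zero]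
  · subst heq
    have : |y| < M := by simpa using hj
    rw [perE_eq, schwE_zero _ _ hM this, zero_mul]
  · set n₀ : ℕ := j.toNat - 1 with hn₀def
    have hc : ((n₀:ℤ)) = j - 1 := by omega
    have hcast : ((n₀:ℝ) + 1) = (j:ℝ) := by
      have := congrArg (Int.cast : ℤ → ℝ) hc
      push_cast at this
      linarith
    have harg : y + ((n₀:ℝ)+1)*L = y + (j:ℝ)*L := by rw [hcast]
    have hz : schwE M (y + ((n₀:ℝ)+1)*L) 0 = 0 := by
      rw [harg]; exact schwE_zero _ _ hM hj
    have hfz : pfac M L 0 y n₀ = 0 := by unfold pfac; rw [hz]; ring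
    rw [perE_eq, (hasProd_zero_of_zero_term _ n₀ hfz).tprod_eq, mul_zero]


/-- For `M > 0`, `L > 2M`, and every `(x,ρ) ∈ ℝ × [0,∞)` not of the form
`(±M + nL, 0)`, the infinite product defining the periodic Schwarzschild Ernst potential
converges, and the resulting function satisfies `E(x+L,ρ) = E(x,ρ)`. -/
theorem statement4 (M L : ℝ) (hM : 0 < M) (hL : 2*M < L) (x ρ : ℝ) (hρ : 0 ≤ ρ)
    (hreg : ∀ n : ℤ, ¬ (ρ = 0 ∧ (x = M + n * L ∨ x = -M + n * L))) :
    Multipliable (fun n : ℕ =>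
      schwE M (x + ((n : ℝ) + 1) * L) ρ * schwE M (x - ((n : ℝ) + 1) * L) ρ *
        Real.exp (4*M / (((n : ℝ) + 1) * L))) ∧
    perE M L (x + L) ρ = perE M L x ρ := by
  have hL0 : 0 < L := by linarith
  constructor
  · exact multipliable_pfac M L ρ x hM hL
  · by_cases hZ : ∃ k : ℤ, ρ = 0 ∧ |x + k*L| < M
    · obtain ⟨k, hρ0, hk⟩ := hZ
      subst hρ0
      have h1 : perE M L x 0 = 0 := perE_eq_zero M L x hM hL0 k hk
      have h2 : perE M L (x+L) 0 = 0 := by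
        apply perE_eq_zero M L (x+L) hM hL0 (k-1)
        have : x + L + ((k:ℝ) - 1)*L = x + (k:ℝ)*L := by ring
        push_cast
        rw [this]
        exact hk
      rw [h1, h2]
    · push_neg at hZ
      have hpos : ∀ k : ℤ, 0 < schwE M (x + k*L) ρ := by
        intro k
        apply schwE_pos _ _ _ hM
        by_cases hρ0 : ρ = 0
        · right
          have h1 : M ≤ |x + k*L| := hZ k hρ0
          have h2 : |x + (k:ℝ)*L| ≠ M := by
            intro h
            rcases (abs_eq hM.le).mp h with h' | h'
            · refine hreg (-k) ⟨hρ0, Or.inl ?_⟩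
              push_cast
              linarith
            · refine hreg (-k) ⟨hρ0, Or.inr ?_⟩
              push_cast
              linarith
          exact lt_of_le_of_ne h1 (Ne.symm h2)
        · exact Or.inl hρ0
      have hposL : ∀ k : ℤ, 0 < schwE M (x + L + k*L) ρ := by
        intro k
        have h := hpos (k+1)
        have e : x + ((k:ℝ)+1)*L = x + L + (k:ℝ)*L := by ring
        push_cast at h
        rw [e] at h
        exact h
      rw [perE_exp M L ρ (x+L) hM hL hposL, perE_exp M L ρ x hM hL hpos,
        omega_shift M L ρ x hM hL]
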